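/- Define rational numbers c_n^l(k) for l ≥ 0, n ≥ 1 and integers k by c₁^l(k) = 1 and c_{n+1}^l(k) = Σ_{i=l+1}^{k−1} c_n^l(i) (empty sum = 0). Then for every l ≥ 0, the family of vectors {(c₁^l(k), c₂^l(k), …, c_{l+1}^l(k)) : k ≥ l+1} spans the whole (l+1)-dimensional vector space ℚ^{l+1}. (Consequently each homogeneous polynomial H_n^l, 1 ≤ n ≤ l+1, is a finite linear combination of the operators W_{k−l}ᵏ, k ≥ l+1, with coefficients independent of μ.) -/

import Mathlib

noncomputable section

/-- The coefficients `c_{n+1}^l(k)`: `ccoef l n k` is `c_{n+1}^l(k)`, defined by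
`c₁^l(k) = 1` and `c_{n+1}^l(k) = Σ_{i=l+1}^{k-1} c_n^l(i)` (empty sum = 0). -/
def ccoef (l : ℕ) : ℕ → ℤ → ℚ
  | 0, _ => 1
  | n + 1, k => ∑ i ∈ Finset.Ico ((l : ℤ) + 1) k, ccoef l n i

lemma hockey (m n : ℕ) : ∑ j ∈ Finset.range m, (j.choose n) = m.choose (n + 1) := by
  induction m with
  | zero => simp
  | succ m ih =>
    rw [Finset.sum_range_succ, ih, Nat.choose_succ_succ' m n, Nat.add_comm]

lemma ccoef_eq (l n m : ℕ) : ccoef l n ((l : ℤ) + 1 + m) = (m.choose n : ℚ) := by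
  induction n generalizing m with
  | zero => simp [ccoef]
  | succ n ih =>
    rw [ccoef]
    have hinj : Function.Injective (fun j : ℕ => (l:ℤ)+1+j) := by intro a b h; simp only at h; omega
    have hmap : Finset.Ico ((l:ℤ)+1) ((l:ℤ)+1+m)
        = (Finset.range m).map ⟨fun j : ℕ => (l:ℤ)+1+j, hinj⟩ := by
      ext x
      simp only [Finset.mem_Ico, Finset.mem_map, Finset.mem_range,
        Function.Embedding.coeFn_mk]
      constructor
      · rintro ⟨h1, h2⟩
        exact ⟨(x - ((l:ℤ)+1)).toNat, by omega, by omega⟩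
      · rintro ⟨j, hj, rfl⟩
        omega
    rw [hmap, Finset.sum_map]
    simp only [Function.Embedding.coeFn_mk]
    rw [Finset.sum_congr rfl (fun j _ => ih j), ← Nat.cast_sum, hockey]

/-- For every `l`, the vectors `(c₁^l(k), …, c_{l+1}^l(k))`,
`k ≥ l + 1`, span all of `ℚ^{l+1}`. -/
theorem stmt14 :
    ∀ l : ℕ, Submodule.span ℚ
        {v : Fin (l + 1) → ℚ |
          ∃ k : ℕ, l + 1 ≤ k ∧ v = fun n : Fin (l + 1) => ccoef l (n : ℕ) (k : ℤ)} =
      ⊤ := by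
  intro l
  set S : Set (Fin (l + 1) → ℚ) :=
    {v : Fin (l + 1) → ℚ |
      ∃ k : ℕ, l + 1 ≤ k ∧ v = fun n : Fin (l + 1) => ccoef l (n : ℕ) (k : ℤ)} with hS
  have key : ∀ j : ℕ, ∀ hj : j < l + 1,
      Pi.single (⟨j, hj⟩ : Fin (l+1)) (1:ℚ) ∈ Submodule.span ℚ S := by
    intro j
    induction j using Nat.strong_induction_on with
    | _ j ih =>
      intro hj
      have hv : (fun n : Fin (l+1) => ccoef l (n:ℕ) ((l+1+j : ℕ) : ℤ))
          ∈ Submodule.span ℚ S :=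
        Submodule.subset_span ⟨l+1+j, by omega, rfl⟩
      have hexp : (fun n : Fin (l+1) => ccoef l (n:ℕ) ((l+1+j : ℕ) : ℤ))
          = ∑ n : Fin (l+1), (j.choose (n:ℕ) : ℚ) • (Pi.single n (1:ℚ) : Fin (l+1) → ℚ) := by
        funext m
        have hcast : ((l+1+j : ℕ) : ℤ) = (l:ℤ) + 1 + (j:ℕ) := by push_cast; ring
        rw [hcast, ccoef_eq]
        rw [Finset.sum_apply]
        simp [Pi.single_apply]
      have hsplit : Pi.single (⟨j, hj⟩ : Fin (l+1)) (1:ℚ)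
          = (fun n : Fin (l+1) => ccoef l (n:ℕ) ((l+1+j : ℕ) : ℤ))
            - ∑ n ∈ Finset.univ.erase (⟨j, hj⟩ : Fin (l+1)),
                (j.choose (n:ℕ) : ℚ) • (Pi.single n (1:ℚ) : Fin (l+1) → ℚ) := by
        rw [hexp, ← Finset.add_sum_erase Finset.univ _ (Finset.mem_univ ⟨j, hj⟩)]
        simp
      rw [hsplit]
      refine Submodule.sub_mem _ hv (Submodule.sum_mem _ ?_)
      intro n hn
      rcases lt_or_ge (n : ℕ) j with hlt | hle
      · exact Submodule.smul_mem _ _ (by simpa [Fin.eta] using ih (n:ℕ) hlt n.isLt)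
      · have hne : (n : ℕ) ≠ j := by
          intro h
          exact (Finset.mem_erase.mp hn).1 (by ext; simp [h])
        have : j < (n : ℕ) := lt_of_le_of_ne hle (Ne.symm hne)
        rw [Nat.choose_eq_zero_of_lt this]
        simp
  rw [eq_top_iff, ← (Pi.basisFun ℚ (Fin (l+1))).span_eq]
  refine Submodule.span_le.mpr ?_
  rintro x ⟨i, rfl⟩
  have : (Pi.basisFun ℚ (Fin (l+1))) i = Pi.single i (1:ℚ) := by
    ext m; simp [Pi.basisFun_apply, Pi.single_apply]
  rw [this]
  simpa [Fin.eta] using key (i:ℕ) i.isLt
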